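/- Let H be a nonzero complex Hilbert space, T ∈ B(H), λ ∈ ℂ, and n ≥ 1. If γ_n(T* + λI, T − λI) = 0, then λ is purely imaginary (Re λ = 0); consequently T* + λI = (T − λI)*, so T − λI is an n-symmetry. -/

import Mathlib

/-- `γ_n(S,T) = Σ_{k=0}^n (−1)^{n−k} C(n,k) S^k T^{n−k}`. -/
noncomputable def gamma {A : Type*} [Ring A] (n : ℕ) (S T : A) : A :=
  ∑ k ∈ Finset.range (n + 1), ((-1 : ℤ) ^ (n - k) * (n.choose k : ℤ)) • (S ^ k * T ^ (n - k))

private lemma gamma_core {A : Type*} [Ring A] [Algebra ℂ A] (n : ℕ) (S T : A) :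
    gamma n S T = ((LinearMap.mulLeft ℂ S - LinearMap.mulRight ℂ T)^n) (1:A) := by
  have hc : Commute (LinearMap.mulLeft ℂ S) (-(LinearMap.mulRight ℂ T)) :=
    (LinearMap.commute_mulLeft_right (R := ℂ) S T).neg_right
  rw [sub_eq_add_neg, hc.add_pow, LinearMap.sum_apply]
  unfold gamma
  refine Finset.sum_congr rfl fun k hk => ?_
  have hneg : (-(LinearMap.mulRight ℂ T)) ^ (n - k)
      = ((-1:ℤ)^(n-k)) • (LinearMap.mulRight ℂ T)^(n-k) := by
    rw [neg_pow (LinearMap.mulRight ℂ T)]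
    simp [Units.smul_def]
  rw [hneg, mul_smul_comm, smul_mul_assoc, LinearMap.smul_apply, mul_smul]
  congr 1
  simp only [Module.End.mul_apply, LinearMap.pow_mulLeft, LinearMap.pow_mulRight,
    Module.End.natCast_apply, LinearMap.mulLeft_apply, LinearMap.mulRight_apply,
    smul_mul_assoc, mul_smul_comm, one_mul]
  rw [natCast_zsmul]

private lemma star_gamma {A : Type*} [Ring A] [StarRing A] (n : ℕ) (S T : A) :
    star (gamma n S T) = ((-1:ℤ)^n) • gamma n (star T) (star S) := by
  unfold gamma
  rw [star_sum, Finset.smul_sum, ← Finset.sum_range_reflect]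
  refine Finset.sum_congr rfl fun k hk => ?_
  have hk' : k ≤ n := Nat.lt_succ_iff.mp (Finset.mem_range.mp hk)
  simp only [Nat.add_sub_cancel]
  rw [Nat.sub_sub_self hk', Nat.choose_symm hk']
  simp only [star_smul, star_mul, star_pow, star_trivial, smul_smul]
  congr 1
  have h2 : (-1:ℤ)^n = (-1)^(n-k) * (-1)^k := by rw [← pow_add, Nat.sub_add_cancel hk']
  have h3 : ((-1:ℤ))^(n-k) * (-1)^(n-k) = 1 := by
    rw [← pow_add]; exact Even.neg_one_pow ⟨n - k, rfl⟩
  rw [h2]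
  linear_combination (-((n.choose k:ℤ) * (-1:ℤ)^k)) * h3

private lemma gamma_aeval {A : Type*} [Ring A] [Algebra ℂ A] (n : ℕ) (S T : A) (c : ℂ) :
    gamma n (S + c • 1) T =
      (Polynomial.aeval (LinearMap.mulLeft ℂ S - LinearMap.mulRight ℂ T)
        ((Polynomial.X + Polynomial.C c)^n)) (1:A) := by
  rw [map_pow, map_add, Polynomial.aeval_X, Polynomial.aeval_C, gamma_core]
  congr 2
  ext x
  simp only [LinearMap.sub_apply, LinearMap.add_apply, LinearMap.mulLeft_apply,
    LinearMap.mulRight_apply, Module.algebraMap_end_apply, add_mul, smul_mul_assoc, one_mul]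
  abel

open Polynomial in
private lemma aux_coprime {c : ℂ} (hc : c ≠ 0) (n : ℕ) :
    IsCoprime ((X + C c)^n) ((X + C (-c))^n) := by
  have h : IsCoprime (X - C (-c) : ℂ[X]) (X - C c) := by
    apply isCoprime_X_sub_C_of_isUnit_sub
    have h0 : (-c - c) ≠ 0 := by
      intro h0; apply hc
      have h1 : (-2 : ℂ) * c = 0 := by linear_combination h0
      rcases mul_eq_zero.mp h1 with h | h
      · norm_num at h
      · exact h
    exact h0.isUnit
  have h' : IsCoprime (X + C c : ℂ[X]) (X + C (-c)) := by
    have e1 : (X + C c : ℂ[X]) = X - C (-c) := by rw [map_neg, sub_neg_eq_add]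
    have e2 : (X + C (-c) : ℂ[X]) = X - C c := by rw [map_neg, ← sub_eq_add_neg]
    rw [e1, e2]; exact h
  exact h'.pow

theorem purely_imaginary_of_gamma_eq_zero
    {H : Type*} [NormedAddCommGroup H] [InnerProductSpace ℂ H] [CompleteSpace H]
    [Nontrivial H] (T : H →L[ℂ] H) (lam : ℂ) (n : ℕ) (hn : 1 ≤ n)
    (h : gamma n (ContinuousLinearMap.adjoint T + lam • 1) (T - lam • 1) = 0) :
    lam.re = 0 ∧
    ContinuousLinearMap.adjoint T + lam • 1 = ContinuousLinearMap.adjoint (T - lam • 1) ∧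
    gamma n (ContinuousLinearMap.adjoint (T - lam • 1)) (T - lam • 1) = 0 := by
  rw [← ContinuousLinearMap.star_eq_adjoint] at h
  set q : ℂ := (starRingEnd ℂ) lam with hq
  set c : ℂ := lam + q with hcdef
  -- nontriviality of the operator algebra
  have hone : (1 : H →L[ℂ] H) ≠ 0 := by
    intro h10
    obtain ⟨x, hx⟩ := exists_ne (0 : H)
    apply hx
    calc x = (1 : H →L[ℂ] H) x := rfl
    _ = (0 : H →L[ℂ] H) x := by rw [h10]
    _ = 0 := rfl
  have hc0 : c = 0 := by
    by_contra hc
    set D : Module.End ℂ (H →L[ℂ] H) :=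
      LinearMap.mulLeft ℂ (star T - q • 1) - LinearMap.mulRight ℂ (T - lam • 1) with hD
    -- first equation
    have e1 : star T + lam • 1 = (star T - q • 1) + c • (1 : H →L[ℂ] H) := by
      rw [hcdef]; module
    have eq1 : (Polynomial.aeval D ((Polynomial.X + Polynomial.C c)^n)) (1 : H →L[ℂ] H) = 0 := by
      rw [hD, ← gamma_aeval, ← e1]; exact h
    -- second equation via star
    have hg2 : gamma n (star (T - lam • 1)) (star (star T + lam • 1)) = 0 := by
      have hs := star_gamma n (star T + lam • 1) (T - lam • 1)
      rw [h, star_zero] at hs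
      have h3 : ((-1:ℤ))^n • ((-1:ℤ))^n • gamma n (star (T - lam • 1)) (star (star T + lam • 1))
          = gamma n (star (T - lam • 1)) (star (star T + lam • 1)) := by
        rw [smul_smul, ← pow_add, Even.neg_one_pow ⟨n, rfl⟩, one_smul]
      rw [← h3, ← hs, smul_zero]
    have hsub : star (T - lam • 1) = star T - q • (1 : H →L[ℂ] H) := by
      rw [star_sub, star_smul, star_one, Complex.star_def, ← hq]
    have hadd : star (star T + lam • 1) = T + q • (1 : H →L[ℂ] H) := by
      rw [star_add, star_star, star_smul, star_one, Complex.star_def, ← hq]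
    rw [hsub, hadd] at hg2
    have e2 : star T - q • 1 = (star T + lam • 1) + (-c) • (1 : H →L[ℂ] H) := by
      rw [hcdef]; module
    have eq2 : (Polynomial.aeval (LinearMap.mulLeft ℂ (star T + lam • 1)
        - LinearMap.mulRight ℂ (T + q • 1)) ((Polynomial.X + Polynomial.C (-c))^n))
        (1 : H →L[ℂ] H) = 0 := by
      rw [← gamma_aeval, ← e2]; exact hg2
    have hDD : LinearMap.mulLeft ℂ (star T + lam • 1) - LinearMap.mulRight ℂ (T + q • 1) = D := by
      rw [hD]; refine LinearMap.ext fun x => ?_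
      simp only [LinearMap.sub_apply, LinearMap.mulLeft_apply, LinearMap.mulRight_apply,
        add_mul, sub_mul, mul_add, mul_sub, smul_mul_assoc, mul_smul_comm, one_mul, mul_one]
      module
    rw [hDD] at eq2
    obtain ⟨u, v, huv⟩ := aux_coprime hc n
    have h0 := congrArg (fun p => (Polynomial.aeval D p) (1 : H →L[ℂ] H)) huv
    simp only [map_add, map_mul, map_one, LinearMap.add_apply, Module.End.mul_apply,
      Module.End.one_apply] at h0
    rw [eq1, eq2, map_zero, map_zero, add_zero] at h0
    exact hone (h0.symm ▸ rfl)
  have hre : lam.re = 0 := by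
    have h1 : lam + (starRingEnd ℂ) lam = 0 := by rw [← hq, ← hcdef]; exact hc0
    rw [Complex.add_conj] at h1
    have h2 := Complex.ofReal_eq_zero.mp h1
    linarith
  have hq' : q = -lam := by
    have : lam + q = 0 := hc0
    linear_combination this
  have hadj : ContinuousLinearMap.adjoint T + lam • 1 = ContinuousLinearMap.adjoint (T - lam • 1) := by
    rw [← ContinuousLinearMap.star_eq_adjoint, ← ContinuousLinearMap.star_eq_adjoint,
      star_sub, star_smul, star_one, Complex.star_def, ← hq, hq']
    module
  refine ⟨hre, hadj, ?_⟩
  rw [← hadj]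
  rw [← ContinuousLinearMap.star_eq_adjoint]
  exact h
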